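/- The descent polynomials R_n(x) over Simsun permutations satisfy the quadratic recursion R_{n+1}(x) = R_n(x) + x Σ_{i=1}^{n} C(n,i) R_{i-1}(x) R_{n-i}(x) for all n ≥ 1, with R_0(x) = 1. -/

import Mathlib

open Finset Polynomial

/-- the entry following position `i` (0-based), well-defined when `i+1 < n` -/
def finSucc {n : ℕ} (i : Fin n) : Fin n := ⟨((i : ℕ) + 1) % n, Nat.mod_lt _ i.pos⟩

def altDesAt {n : ℕ} (π : Equiv.Perm (Fin n)) (i : Fin n) : Prop :=
  (i : ℕ) + 1 < n ∧
    (if ((i : ℕ) + 1) % 2 = 0 then π i < π (finSucc i) else π (finSucc i) < π i)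

instance {n : ℕ} (π : Equiv.Perm (Fin n)) (i : Fin n) : Decidable (altDesAt π i) := by
  unfold altDesAt; infer_instance

/-- number of alternating descents -/
def altdes {n : ℕ} (π : Equiv.Perm (Fin n)) : ℕ :=
  (Finset.univ.filter (fun i => altDesAt π i)).card

/-- alternating major index -/
def altmaj {n : ℕ} (π : Equiv.Perm (Fin n)) : ℕ :=
  ∑ i ∈ Finset.univ.filter (fun i => altDesAt π i), ((i : ℕ) + 1)

/-- ordinary descent at position `i` (0-based): `π(i) > π(i+1)` -/
def desAt {n : ℕ} (π : Equiv.Perm (Fin n)) (i : Fin n) : Prop :=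
  (i : ℕ) + 1 < n ∧ π (finSucc i) < π i

instance {n : ℕ} (π : Equiv.Perm (Fin n)) (i : Fin n) : Decidable (desAt π i) := by
  unfold desAt; infer_instance

/-- number of descents -/
def des {n : ℕ} (π : Equiv.Perm (Fin n)) : ℕ :=
  (Finset.univ.filter (fun i => desAt π i)).card

/-- `π` is Simsun: for every `k`, after removing all letters `≥ k` the remaining word
has no double descent. -/
def Simsun {n : ℕ} (π : Equiv.Perm (Fin n)) : Prop :=
  ∀ k : ℕ, ∀ a b c : ℕ,
    [a, b, c] <:+: ((List.ofFn (fun i => ((π i : ℕ)))).filter (fun v => v < k)) →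
    ¬ (b < a ∧ c < b)

open Classical in
/-- the descent polynomial over Simsun permutations, as a function on `ℚ` -/
noncomputable def Rsim (n : ℕ) (x : ℚ) : ℚ :=
  ∑ π ∈ Finset.univ.filter (fun π : Equiv.Perm (Fin n) => Simsun π), x ^ des π


namespace SimAux

/-- number of descents of a word -/
def ldes : List ℕ → ℕ
  | a :: b :: t => (if b < a then 1 else 0) + ldes (b :: t)
  | _ => 0

/-- has a double descent -/
def dd (w : List ℕ) : Prop := ∃ a b c, [a, b, c] <:+: w ∧ b < a ∧ c < b

/-- ends in a descent -/
def edes (w : List ℕ) : Prop := ∃ a b, [a, b] <:+ w ∧ b < a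

def ss (w : List ℕ) : Prop := ∀ k : ℕ, ¬ dd (w.filter (fun v => v < k))

def good (w : List ℕ) : Prop := ss w ∧ ∀ k : ℕ, ¬ edes (w.filter (fun v => v < k))

lemma dd_nil : ¬ dd ([] : List ℕ) := by
  rintro ⟨a, b, c, h, -⟩
  have := h.length_le; simp at this

lemma edes_nil : ¬ edes ([] : List ℕ) := by
  rintro ⟨a, b, h, -⟩
  have := h.length_le; simp at this

lemma dd_cons {a : ℕ} {w : List ℕ} :
    dd (a :: w) ↔ (∃ b c t, w = b :: c :: t ∧ b < a ∧ c < b) ∨ dd w := by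
  constructor
  · rintro ⟨p, q, r, hinf, h1, h2⟩
    rcases List.infix_cons_iff.1 hinf with hpre | hinf'
    · rcases hpre with ⟨t, ht⟩
      simp only [List.cons_append] at ht
      obtain ⟨rfl, hw⟩ : p = a ∧ q :: r :: t = w := by
        constructor
        · exact (List.cons.injEq _ _ _ _ ▸ ht).1
        · exact (List.cons.injEq _ _ _ _ ▸ ht).2
      exact Or.inl ⟨q, r, t, hw.symm, h1, h2⟩
    · exact Or.inr ⟨p, q, r, hinf', h1, h2⟩
  · rintro (⟨b, c, t, rfl, h1, h2⟩ | ⟨p, q, r, hinf, h1, h2⟩)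
    · exact ⟨a, b, c, ⟨[], t, rfl⟩, h1, h2⟩
    · exact ⟨p, q, r, hinf.trans (List.infix_cons (List.infix_refl w)), h1, h2⟩

lemma edes_cons {a : ℕ} {w : List ℕ} :
    edes (a :: w) ↔ (∃ b, w = [b] ∧ b < a) ∨ edes w := by
  constructor
  · rintro ⟨p, q, ⟨t, ht⟩, h1⟩
    rcases t with _ | ⟨c, t'⟩
    · simp only [List.nil_append] at ht
      obtain ⟨rfl, hw⟩ := List.cons.injEq _ _ _ _ ▸ ht
      exact Or.inl ⟨q, hw.symm, h1⟩
    · simp only [List.cons_append] at ht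
      obtain ⟨rfl, hw⟩ := List.cons.injEq _ _ _ _ ▸ ht
      exact Or.inr ⟨p, q, ⟨t', hw⟩, h1⟩
  · rintro (⟨b, rfl, h1⟩ | ⟨p, q, ⟨t, ht⟩, h1⟩)
    · exact ⟨a, b, ⟨[], rfl⟩, h1⟩
    · exact ⟨p, q, ⟨a :: t, by simp [← ht]⟩, h1⟩

lemma edes_singleton {a : ℕ} : ¬ edes [a] := by
  rw [show [a] = a :: [] from rfl, edes_cons]
  rintro (⟨b, h, -⟩ | h)
  · simp at h
  · exact edes_nil h

lemma dd_singleton {a : ℕ} : ¬ dd [a] := by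
  rw [show [a] = a :: [] from rfl, dd_cons]
  rintro (⟨b, c, t, h, -⟩ | h)
  · simp at h
  · exact dd_nil h

lemma dd_pair {a b : ℕ} : ¬ dd [a, b] := by
  rw [show [a, b] = a :: [b] from rfl, dd_cons]
  rintro (⟨p, q, t, h, -⟩ | h)
  · simp at h
  · exact dd_singleton h

/-- key: double descents of `α ++ m :: β` when `m` is smaller than all letters -/
lemma dd_append {α β : List ℕ} {m : ℕ} (hα : ∀ a ∈ α, m < a) (hβ : ∀ b ∈ β, m < b) :
    dd (α ++ m :: β) ↔ dd α ∨ dd β ∨ edes α := by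
  induction α with
  | nil =>
    simp only [List.nil_append]
    rw [dd_cons]
    constructor
    · rintro (⟨b, c, t, hw, h1, h2⟩ | h)
      · exfalso
        have hb : b ∈ β := by rw [hw]; exact List.mem_cons_self
        exact absurd h1 (not_lt.2 (hβ b hb).le)
      · exact Or.inr (Or.inl h)
    · rintro (h | h | h)
      · exact absurd h dd_nil
      · exact Or.inr h
      · exact absurd h edes_nil
  | cons a α' ih =>
    have hα' : ∀ x ∈ α', m < x := fun x hx => hα x (List.mem_cons_of_mem _ hx)
    have ham : m < a := hα a (List.mem_cons_self)
    rw [List.cons_append, dd_cons, ih hα', dd_cons, edes_cons]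
    constructor
    · rintro (⟨b, c, t, hw, h1, h2⟩ | h)
      · rcases α' with _ | ⟨b', α''⟩
        · exfalso
          simp only [List.nil_append, List.cons.injEq] at hw
          obtain ⟨hb, hc⟩ := hw
          have hc' : c ∈ β := by rw [hc]; exact List.mem_cons_self
          rw [← hb] at h2
          exact absurd h2 (not_lt.2 (hβ c hc').le)
        · rcases α'' with _ | ⟨c', α'''⟩
          · simp only [List.cons_append, List.nil_append, List.cons.injEq] at hw
            obtain ⟨hb, -⟩ := hw
            exact Or.inr (Or.inr (Or.inl ⟨b', rfl, by rw [hb]; exact h1⟩))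
          · simp only [List.cons_append, List.cons.injEq] at hw
            obtain ⟨hb, hc, -⟩ := hw
            exact Or.inl (Or.inl ⟨b', c', α''', rfl, hb ▸ h1, hb ▸ hc ▸ h2⟩)
      · rcases h with h | h | h
        · exact Or.inl (Or.inr h)
        · exact Or.inr (Or.inl h)
        · exact Or.inr (Or.inr (Or.inr h))
    · rintro ((⟨b, c, t, ht, h1, h2⟩ | h) | h | (⟨b, hb, h1⟩ | h))
      · exact Or.inl ⟨b, c, t ++ m :: β, by rw [ht]; simp, h1, h2⟩
      · exact Or.inr (Or.inl h)
      · exact Or.inr (Or.inr (Or.inl h))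
      · refine Or.inl ⟨b, m, β, by rw [hb]; simp, h1, ?_⟩
        exact hα' b (by rw [hb]; exact List.mem_cons_self)
      · exact Or.inr (Or.inr (Or.inr h))
lemma edes_append {α β : List ℕ} {m : ℕ} (hα : ∀ a ∈ α, m < a) (hβ : ∀ b ∈ β, m < b) :
    edes (α ++ m :: β) ↔ edes β ∨ (β = [] ∧ α ≠ []) := by
  induction α with
  | nil =>
    simp only [List.nil_append, ne_eq, not_true_eq_false, and_false, or_false]
    rw [edes_cons]
    constructor
    · rintro (⟨b, hb, h1⟩ | h)
      · exact absurd h1 (not_lt.2 (hβ b (by rw [hb]; exact List.mem_cons_self)).le)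
      · exact h
    · exact fun h => Or.inr h
  | cons a α' ih =>
    have hα' : ∀ x ∈ α', m < x := fun x hx => hα x (List.mem_cons_of_mem _ hx)
    rw [List.cons_append, edes_cons, ih hα']
    constructor
    · rintro (⟨b, hb, h1⟩ | h | ⟨h1, h2⟩)
      · -- α' ++ m :: β = [b] forces α' = [], β = [], b = m
        rcases List.append_eq_cons_iff.1 hb with ⟨ha', hmb⟩ | ⟨t, -, ht⟩
        · obtain ⟨hbm, hβnil⟩ := List.cons.injEq _ _ _ _ ▸ hmb
          exact Or.inr ⟨hβnil, by simp⟩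
        · exact absurd ht (by simp)
      · exact Or.inl h
      · exact Or.inr ⟨h1, by simp⟩
    · rintro (h | ⟨h1, -⟩)
      · exact Or.inr (Or.inl h)
      · subst h1
        rcases α' with _ | ⟨b', t'⟩
        · exact Or.inl ⟨m, rfl, hα a (List.mem_cons_self)⟩
        · exact Or.inr (Or.inr ⟨rfl, by simp⟩)

lemma ldes_cons_of_lt {m : ℕ} {β : List ℕ} (hβ : ∀ b ∈ β, m < b) : ldes (m :: β) = ldes β := by
  cases β with
  | nil => rfl
  | cons b t =>
    show (if b < m then 1 else 0) + ldes (b :: t) = ldes (b :: t)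
    rw [if_neg (not_lt.2 (hβ b (List.mem_cons_self)).le), Nat.zero_add]

lemma ldes_append {α β : List ℕ} {m : ℕ} (hα : ∀ a ∈ α, m < a) (hβ : ∀ b ∈ β, m < b) :
    ldes (α ++ m :: β) = ldes α + ldes β + (if α = [] then 0 else 1) := by
  induction α with
  | nil => simp [ldes_cons_of_lt hβ, ldes]
  | cons a α' ih =>
    have hα' : ∀ x ∈ α', m < x := fun x hx => hα x (List.mem_cons_of_mem _ hx)
    rcases α' with _ | ⟨b, t⟩
    · show ldes (a :: m :: β) = ldes [a] + ldes β + 1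
      show (if m < a then 1 else 0) + ldes (m :: β) = ldes [a] + ldes β + 1
      rw [if_pos (hα a (List.mem_cons_self)), ldes_cons_of_lt hβ]
      show 1 + ldes β = 0 + ldes β + 1
      omega
    · show (if b < a then 1 else 0) + ldes ((b :: t) ++ m :: β)
        = ((if b < a then 1 else 0) + ldes (b :: t)) + ldes β + 1
      rw [ih hα', if_neg (List.cons_ne_nil b t)]
      omega

lemma filter_lt_nil {w : List ℕ} {k : ℕ} (hw : ∀ a ∈ w, k ≤ a) :
    w.filter (fun v => v < k) = [] := by
  rw [List.filter_eq_nil_iff]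
  intro a ha
  simpa using not_lt.2 (hw a ha)

lemma mem_filter_lt {w : List ℕ} {k a : ℕ} (h : a ∈ w.filter (fun v => v < k)) : a ∈ w :=
  (List.mem_filter.1 h).1

lemma filter_split {α β : List ℕ} {m k : ℕ} (hk : m < k) :
    (α ++ m :: β).filter (fun v => v < k)
      = α.filter (fun v => v < k) ++ m :: β.filter (fun v => v < k) := by
  rw [List.filter_append, List.filter_cons, if_pos (by simpa using hk)]

lemma ss_append {α β : List ℕ} {m : ℕ} (hα : ∀ a ∈ α, m < a) (hβ : ∀ b ∈ β, m < b) :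
    ss (α ++ m :: β) ↔ good α ∧ ss β := by
  have key : ∀ k, m < k →
      (dd ((α ++ m :: β).filter (fun v => v < k)) ↔
        dd (α.filter (fun v => v < k)) ∨ dd (β.filter (fun v => v < k))
          ∨ edes (α.filter (fun v => v < k))) := by
    intro k hk
    rw [filter_split hk]
    exact dd_append (fun a ha => hα a (mem_filter_lt ha)) (fun b hb => hβ b (mem_filter_lt hb))
  constructor
  · intro h
    refine ⟨⟨fun k => ?_, fun k => ?_⟩, fun k => ?_⟩ <;>
      rcases le_or_gt k m with hk | hk
    · rw [filter_lt_nil (fun a ha => hk.trans (hα a ha).le)]; exact dd_nil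
    · exact fun hdd => (h k) ((key k hk).2 (Or.inl hdd))
    · rw [filter_lt_nil (fun a ha => hk.trans (hα a ha).le)]; exact edes_nil
    · exact fun hed => (h k) ((key k hk).2 (Or.inr (Or.inr hed)))
    · rw [filter_lt_nil (fun a ha => hk.trans (hβ a ha).le)]; exact dd_nil
    · exact fun hdd => (h k) ((key k hk).2 (Or.inr (Or.inl hdd)))
  · rintro ⟨⟨h1, h2⟩, h3⟩ k
    rcases le_or_gt k m with hk | hk
    · rw [filter_lt_nil (w := α ++ m :: β) (by
        intro a ha
        rcases List.mem_append.1 ha with h | h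
        · exact hk.trans (hα a h).le
        · rcases List.mem_cons.1 h with rfl | h
          · exact hk
          · exact hk.trans (hβ a h).le)]
      exact dd_nil
    · rw [key k hk]
      rintro (h | h | h)
      · exact h1 k h
      · exact h3 k h
      · exact h2 k h

lemma good_append {α β : List ℕ} {m : ℕ} (hα : ∀ a ∈ α, m < a) (hβ : ∀ b ∈ β, m < b) :
    good (α ++ m :: β) ↔ good α ∧ good β ∧
      (∀ k, β.filter (fun v => v < k) = [] → α.filter (fun v => v < k) = []) := by
  have key : ∀ k, m < k →
      (edes ((α ++ m :: β).filter (fun v => v < k)) ↔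
        edes (β.filter (fun v => v < k)) ∨
          (β.filter (fun v => v < k) = [] ∧ α.filter (fun v => v < k) ≠ [])) := by
    intro k hk
    rw [filter_split hk]
    exact edes_append (fun a ha => hα a (mem_filter_lt ha)) (fun b hb => hβ b (mem_filter_lt hb))
  unfold good
  rw [ss_append hα hβ]
  constructor
  · rintro ⟨⟨hgα, hssβ⟩, hed⟩
    refine ⟨hgα, ⟨hssβ, fun k => ?_⟩, fun k => ?_⟩ <;> rcases le_or_gt k m with hk | hk
    · rw [filter_lt_nil (fun a ha => hk.trans (hβ a ha).le)]; exact edes_nil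
    · exact fun h => (hed k) ((key k hk).2 (Or.inl h))
    · intro _; exact filter_lt_nil (fun a ha => hk.trans (hα a ha).le)
    · intro hb
      by_contra hne
      exact (hed k) ((key k hk).2 (Or.inr ⟨hb, hne⟩))
  · rintro ⟨hgα, ⟨hssβ, hedβ⟩, hdom⟩
    refine ⟨⟨hgα, hssβ⟩, fun k => ?_⟩
    rcases le_or_gt k m with hk | hk
    · rw [filter_lt_nil (w := α ++ m :: β) (by
        intro a ha
        rcases List.mem_append.1 ha with h | h
        · exact hk.trans (hα a h).le
        · rcases List.mem_cons.1 h with rfl | h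
          · exact hk
          · exact hk.trans (hβ a h).le)]
      exact edes_nil
    · rw [key k hk]
      rintro (h | ⟨h1, h2⟩)
      · exact hedβ k h
      · exact h2 (hdom k h1)
section MapInv

variable {φ : ℕ → ℕ}

lemma dd_map (hφ : StrictMono φ) {w : List ℕ} : dd (w.map φ) ↔ dd w := by
  constructor
  · rintro ⟨a, b, c, ⟨s, t, hst⟩, h1, h2⟩
    obtain ⟨s', u', hw, hs', hu'⟩ := List.map_eq_append_iff.1 hst.symm
    obtain ⟨s'', u'', hs2, hs'', hu''⟩ := List.map_eq_append_iff.1 hs'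
    rcases u'' with _ | ⟨a', u3⟩; · simp at hu''
    rcases u3 with _ | ⟨b', u4⟩; · simp at hu''
    rcases u4 with _ | ⟨c', u5⟩; · simp at hu''
    rcases u5 with _ | ⟨d', u6⟩
    swap; · simp at hu''
    simp only [List.map_cons, List.map_nil, List.cons.injEq, and_true] at hu''
    obtain ⟨ha, hb, hc⟩ := hu''
    refine ⟨a', b', c', ⟨s'', u', by rw [hw, hs2]⟩, ?_, ?_⟩
    · rw [← hφ.lt_iff_lt, ha, hb]; exact h1
    · rw [← hφ.lt_iff_lt, hb, hc]; exact h2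
  · rintro ⟨a, b, c, hinf, h1, h2⟩
    exact ⟨φ a, φ b, φ c, by simpa using hinf.map φ, hφ h1, hφ h2⟩

lemma edes_map (hφ : StrictMono φ) {w : List ℕ} : edes (w.map φ) ↔ edes w := by
  constructor
  · rintro ⟨a, b, ⟨s, hst⟩, h1⟩
    obtain ⟨s', u', hw, hs', hu'⟩ := List.map_eq_append_iff.1 hst.symm
    rcases u' with _ | ⟨a', u3⟩; · simp at hu'
    rcases u3 with _ | ⟨b', u4⟩; · simp at hu'
    rcases u4 with _ | ⟨c', u5⟩
    swap; · simp at hu'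
    simp only [List.map_cons, List.map_nil, List.cons.injEq, and_true] at hu'
    obtain ⟨ha, hb⟩ := hu'
    exact ⟨a', b', ⟨s', by rw [hw]⟩, by rw [← hφ.lt_iff_lt, ha, hb]; exact h1⟩
  · rintro ⟨a, b, hsuf, h1⟩
    exact ⟨φ a, φ b, by simpa using hsuf.map φ, hφ h1⟩

lemma ldes_map (hφ : StrictMono φ) : ∀ w : List ℕ, ldes (w.map φ) = ldes w
  | [] => rfl
  | [a] => rfl
  | a :: b :: t => by
    show (if φ b < φ a then 1 else 0) + ldes ((b :: t).map φ)
      = (if b < a then 1 else 0) + ldes (b :: t)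
    rw [ldes_map hφ (b :: t)]
    congr 1
    exact if_congr hφ.lt_iff_lt rfl rfl

lemma filter_map_lt_of_thresh (w : List ℕ) {k k' : ℕ} (h : ∀ v, φ v < k ↔ v < k') :
    (w.map φ).filter (fun v => v < k) = (w.filter (fun v => v < k')).map φ := by
  rw [List.filter_map]
  congr 1
  apply List.filter_congr
  intro a _
  simp [Function.comp, h a]

lemma exists_thresh (hφ : StrictMono φ) (k : ℕ) : ∃ k', ∀ v, φ v < k ↔ v < k' := by
  have hex : ∃ n, ¬ φ n < k := ⟨k, not_lt.2 hφ.le_apply⟩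
  refine ⟨Nat.find hex, fun v => ?_⟩
  constructor
  · intro hv
    by_contra hv'
    exact Nat.find_spec hex (lt_of_le_of_lt (hφ.monotone (not_lt.1 hv')) hv)
  · intro hv
    by_contra hv'
    exact (Nat.find_min hex hv) hv'

lemma ss_map (hφ : StrictMono φ) {w : List ℕ} : ss (w.map φ) ↔ ss w := by
  constructor
  · intro h k
    have heq := filter_map_lt_of_thresh (φ := φ) w (k := φ k) (k' := k)
      (fun v => hφ.lt_iff_lt)
    intro hdd
    exact h (φ k) (by rw [heq, dd_map hφ]; exact hdd)
  · intro h k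
    obtain ⟨k', hk'⟩ := exists_thresh hφ k
    rw [filter_map_lt_of_thresh w hk', dd_map hφ]
    exact h k'

lemma good_map (hφ : StrictMono φ) {w : List ℕ} : good (w.map φ) ↔ good w := by
  unfold good
  rw [ss_map hφ]
  refine and_congr_right fun _ => ⟨fun h k => ?_, fun h k => ?_⟩
  · have heq := filter_map_lt_of_thresh (φ := φ) w (k := φ k) (k' := k)
      (fun v => hφ.lt_iff_lt)
    intro hed
    exact h (φ k) (by rw [heq, edes_map hφ]; exact hed)
  · obtain ⟨k', hk'⟩ := exists_thresh hφ k
    rw [filter_map_lt_of_thresh w hk', edes_map hφ]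
    exact h k'

end MapInv
/-! ### Words on a finite set -/

def wordsOn (S : Finset ℕ) : Finset (List ℕ) :=
  ⟨↑((S.sort (· ≤ ·)).permutations), by
    rw [Multiset.coe_nodup]
    exact List.nodup_permutations _ (S.sort_nodup (· ≤ ·))⟩

lemma mem_wordsOn {S : Finset ℕ} {w : List ℕ} :
    w ∈ wordsOn S ↔ w.Perm (S.sort (· ≤ ·)) := by
  simp [wordsOn, Finset.mem_mk, List.mem_permutations]

lemma mem_wordsOn_iff {S : Finset ℕ} {w : List ℕ} :
    w ∈ wordsOn S ↔ w.Nodup ∧ ∀ a, a ∈ w ↔ a ∈ S := by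
  rw [mem_wordsOn]
  constructor
  · intro h
    refine ⟨h.nodup_iff.2 (S.sort_nodup _), fun a => (h.mem_iff).trans (Finset.mem_sort _)⟩
  · rintro ⟨hnd, hmem⟩
    exact (List.perm_ext_iff_of_nodup hnd (S.sort_nodup _)).2
      fun a => (hmem a).trans (Finset.mem_sort _).symm

lemma length_of_mem_wordsOn {S : Finset ℕ} {w : List ℕ} (h : w ∈ wordsOn S) :
    w.length = S.card := by
  rw [(mem_wordsOn.1 h).length_eq, Finset.length_sort]

lemma wordsOn_empty : wordsOn ∅ = {([] : List ℕ)} := by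
  ext w
  rw [mem_wordsOn_iff, Finset.mem_singleton]
  constructor
  · rintro ⟨-, hmem⟩
    exact List.eq_nil_iff_forall_not_mem.2 fun a ha => by simpa using (hmem a).1 ha
  · rintro rfl
    exact ⟨List.nodup_nil, by simp⟩

lemma wordsOn_singleton (m : ℕ) : wordsOn {m} = {[m]} := by
  ext w
  rw [mem_wordsOn, Finset.sort_singleton, List.perm_singleton, Finset.mem_singleton]

open Classical in
noncomputable def Aw (S : Finset ℕ) (x : ℚ) : ℚ :=
  ∑ w ∈ wordsOn S, if ss w then x ^ ldes w else 0

open Classical in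
noncomputable def Bw (S : Finset ℕ) (x : ℚ) : ℚ :=
  ∑ w ∈ wordsOn S, if good w then x ^ ldes w else 0

lemma ss_nil : ss ([] : List ℕ) := fun k => by rw [List.filter_nil]; exact dd_nil

lemma good_nil : good ([] : List ℕ) :=
  ⟨ss_nil, fun k => by rw [List.filter_nil]; exact edes_nil⟩

lemma filter_singleton_cases (m : ℕ) (p : ℕ → Bool) :
    [m].filter p = [m] ∨ [m].filter p = [] := by
  by_cases h : p m
  · left; simp [List.filter, h]
  · right; simp [List.filter, h]

lemma ss_singleton {m : ℕ} : ss [m] := by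
  intro k
  rcases filter_singleton_cases m _ with h | h <;> rw [h]
  · exact dd_singleton
  · exact dd_nil

lemma good_singleton {m : ℕ} : good [m] := by
  refine ⟨ss_singleton, fun k => ?_⟩
  rcases filter_singleton_cases m _ with h | h <;> rw [h]
  · exact edes_singleton
  · exact edes_nil

lemma Aw_empty (x : ℚ) : Aw ∅ x = 1 := by
  rw [Aw, wordsOn_empty, Finset.sum_singleton, if_pos ss_nil]
  simp [ldes]

lemma Bw_empty (x : ℚ) : Bw ∅ x = 1 := by
  rw [Bw, wordsOn_empty, Finset.sum_singleton, if_pos good_nil]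
  simp [ldes]

lemma Bw_singleton (m : ℕ) (x : ℚ) : Bw {m} x = 1 := by
  rw [Bw, wordsOn_singleton, Finset.sum_singleton, if_pos good_singleton]
  simp [ldes]

section Image

variable {φ : ℕ → ℕ}

lemma wordsOn_image (hφ : StrictMono φ) (S : Finset ℕ) :
    wordsOn (S.image φ) = (wordsOn S).image (List.map φ) := by
  ext w
  rw [mem_wordsOn_iff, Finset.mem_image]
  constructor
  · rintro ⟨hnd, hmem⟩
    set ψ := Function.invFun φ with hψ
    have hinv : ∀ a ∈ w, φ (ψ a) = a := by
      intro a ha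
      obtain ⟨b, hb, rfl⟩ := Finset.mem_image.1 ((hmem a).1 ha)
      exact Function.invFun_eq ⟨b, rfl⟩
    refine ⟨w.map ψ, mem_wordsOn_iff.2 ⟨?_, ?_⟩, ?_⟩
    · refine List.Nodup.map_on ?_ hnd
      intro a ha b hb hab
      rw [← hinv a ha, ← hinv b hb, hab]
    · intro b
      constructor
      · intro hb
        obtain ⟨a, ha, rfl⟩ := List.mem_map.1 hb
        obtain ⟨c, hc, hca⟩ := Finset.mem_image.1 ((hmem a).1 ha)
        have : φ (ψ a) = φ c := by rw [hinv a ha, hca]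
        rw [hφ.injective this]; exact hc
      · intro hb
        have : φ b ∈ w := (hmem (φ b)).2 (Finset.mem_image_of_mem φ hb)
        have h2 : ψ (φ b) = b := Function.leftInverse_invFun hφ.injective b
        exact h2 ▸ List.mem_map_of_mem (f := ψ) this
    · rw [List.map_map]
      exact List.map_congr_left (fun a ha => hinv a ha) |>.trans (List.map_id w) |>.symm ▸ rfl
  · rintro ⟨u, hu, rfl⟩
    rw [mem_wordsOn_iff] at hu
    refine ⟨hu.1.map hφ.injective, fun a => ?_⟩
    simp only [List.mem_map, Finset.mem_image]
    constructor
    · rintro ⟨c, hc, rfl⟩; exact ⟨c, (hu.2 c).1 hc, rfl⟩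
    · rintro ⟨c, hc, rfl⟩; exact ⟨c, (hu.2 c).2 hc, rfl⟩

open Classical in
lemma Aw_image (hφ : StrictMono φ) (S : Finset ℕ) (x : ℚ) : Aw (S.image φ) x = Aw S x := by
  unfold Aw
  rw [wordsOn_image hφ, Finset.sum_image (fun u _ v _ h => List.map_injective_iff.2 hφ.injective h)]
  refine Finset.sum_congr rfl fun w _ => ?_
  rw [ldes_map hφ w]
  by_cases h : ss w
  · rw [if_pos ((ss_map hφ).2 h), if_pos h]
  · rw [if_neg (fun hc => h ((ss_map hφ).1 hc)), if_neg h]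

open Classical in
lemma Bw_image (hφ : StrictMono φ) (S : Finset ℕ) (x : ℚ) : Bw (S.image φ) x = Bw S x := by
  unfold Bw
  rw [wordsOn_image hφ, Finset.sum_image (fun u _ v _ h => List.map_injective_iff.2 hφ.injective h)]
  refine Finset.sum_congr rfl fun w _ => ?_
  rw [ldes_map hφ w]
  by_cases h : good w
  · rw [if_pos ((good_map hφ).2 h), if_pos h]
  · rw [if_neg (fun hc => h ((good_map hφ).1 hc)), if_neg h]

end Image

lemma exists_strictMono_image (S : Finset ℕ) :
    ∃ φ : ℕ → ℕ, StrictMono φ ∧ (Finset.range S.card).image φ = S := by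
  classical
  set n := S.card with hn
  by_cases hS : S.Nonempty
  · set M := S.max' hS + 1 with hM
    set e := S.orderIsoOfFin hn.symm with he
    refine ⟨fun v => if h : v < n then (e ⟨v, h⟩ : ℕ) else v + M, ?_, ?_⟩
    · intro u v huv
      by_cases hu : u < n <;> by_cases hv : v < n
      · simp only [dif_pos hu, dif_pos hv]
        exact_mod_cast e.strictMono (show (⟨u, hu⟩ : Fin n) < ⟨v, hv⟩ from huv)
      · simp only [dif_pos hu, dif_neg hv]
        have h1 : (e ⟨u, hu⟩ : ℕ) ≤ S.max' hS := Finset.le_max' S _ (e ⟨u, hu⟩).2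
        omega
      · omega
      · simp only [dif_neg hu, dif_neg hv]
        omega
    · ext b
      simp only [Finset.mem_image, Finset.mem_range]
      constructor
      · rintro ⟨v, hv, rfl⟩
        rw [dif_pos hv]
        exact (e ⟨v, hv⟩).2
      · intro hb
        obtain ⟨i, hi⟩ := e.surjective ⟨b, hb⟩
        exact ⟨i, i.2, by rw [dif_pos i.2]; rw [hi]⟩
  · have : S = ∅ := Finset.not_nonempty_iff_eq_empty.1 hS
    subst this
    exact ⟨id, strictMono_id, by simp [hn]⟩

noncomputable def An (n : ℕ) (x : ℚ) : ℚ := Aw (Finset.range n) x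
noncomputable def Bn (n : ℕ) (x : ℚ) : ℚ := Bw (Finset.range n) x

lemma Aw_eq_An (S : Finset ℕ) (x : ℚ) : Aw S x = An S.card x := by
  obtain ⟨φ, hφ, himg⟩ := exists_strictMono_image S
  conv_lhs => rw [← himg]
  rw [Aw_image hφ]
  rfl

lemma Bw_eq_Bn (S : Finset ℕ) (x : ℚ) : Bw S x = Bn S.card x := by
  obtain ⟨φ, hφ, himg⟩ := exists_strictMono_image S
  conv_lhs => rw [← himg]
  rw [Bw_image hφ]
  rfl
/-! ### splitting a word at the letter `m` -/

lemma takeWhile_ne_append {m : ℕ} :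
    ∀ w : List ℕ, m ∈ w →
      w.takeWhile (fun v => v ≠ m) ++ m :: (w.dropWhile (fun v => v ≠ m)).tail = w := by
  intro w hm
  induction w with
  | nil => simp at hm
  | cons a w ih =>
    by_cases ha : a = m
    · subst ha
      rw [List.takeWhile_cons_of_neg (by simp), List.dropWhile_cons_of_neg (by simp)]
      simp
    · rw [List.takeWhile_cons_of_pos (by simpa using ha),
        List.dropWhile_cons_of_pos (by simpa using ha), List.cons_append]
      have hm' : m ∈ w := by
        rcases List.mem_cons.1 hm with h | h
        · exact absurd h.symm ha
        · exact h
      rw [ih hm']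

lemma takeWhile_ne_of_not_mem {m : ℕ} {α β : List ℕ} (hα : m ∉ α) :
    (α ++ m :: β).takeWhile (fun v => v ≠ m) = α ∧
      (α ++ m :: β).dropWhile (fun v => v ≠ m) = m :: β := by
  induction α with
  | nil =>
    constructor
    · rw [List.nil_append, List.takeWhile_cons_of_neg (by simp)]
    · rw [List.nil_append, List.dropWhile_cons_of_neg (by simp)]
  | cons a t ih =>
    have ha : a ≠ m := fun h => hα (h ▸ List.mem_cons_self)
    have ht : m ∉ t := fun h => hα (List.mem_cons_of_mem _ h)
    obtain ⟨ih1, ih2⟩ := ih ht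
    constructor
    · rw [List.cons_append, List.takeWhile_cons_of_pos (by simpa using ha), ih1]
    · rw [List.cons_append, List.dropWhile_cons_of_pos (by simpa using ha), ih2]

lemma sum_wordsOn_insert {m : ℕ} {S : Finset ℕ} (hm : m ∉ S) (F : List ℕ → ℚ) :
    ∑ w ∈ wordsOn (insert m S), F w
      = ∑ T ∈ S.powerset, ∑ α ∈ wordsOn T, ∑ β ∈ wordsOn (S \ T), F (α ++ m :: β) := by
  classical
  have hrhs : ∑ T ∈ S.powerset, ∑ α ∈ wordsOn T, ∑ β ∈ wordsOn (S \ T), F (α ++ m :: β)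
      = ∑ p ∈ S.powerset.sigma (fun T => wordsOn T ×ˢ wordsOn (S \ T)),
          F (p.2.1 ++ m :: p.2.2) := by
    calc ∑ T ∈ S.powerset, ∑ α ∈ wordsOn T, ∑ β ∈ wordsOn (S \ T), F (α ++ m :: β)
        = ∑ T ∈ S.powerset, ∑ q ∈ wordsOn T ×ˢ wordsOn (S \ T), F (q.1 ++ m :: q.2) :=
          Finset.sum_congr rfl fun T _ => (Finset.sum_product' _ _ _).symm
      _ = _ := Finset.sum_sigma' _ _ _
  rw [hrhs]
  refine Finset.sum_nbij'
    (fun w => (⟨(w.takeWhile (fun v => v ≠ m)).toFinset,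
      (w.takeWhile (fun v => v ≠ m), (w.dropWhile (fun v => v ≠ m)).tail)⟩ :
        Σ _ : Finset ℕ, List ℕ × List ℕ))
    (fun p => p.2.1 ++ m :: p.2.2) ?_ ?_ ?_ ?_ ?_
  · -- forward map lands in the sigma set
    intro w hw
    rw [mem_wordsOn_iff] at hw
    obtain ⟨hnd, hmem⟩ := hw
    have hmw : m ∈ w := (hmem m).2 (Finset.mem_insert_self m S)
    set α := w.takeWhile (fun v => v ≠ m) with hαdef
    set β := (w.dropWhile (fun v => v ≠ m)).tail with hβdef
    have hsplit : α ++ m :: β = w := takeWhile_ne_append w hmw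
    have hαsub : ∀ a ∈ α, a ∈ S := by
      intro a ha
      have ha' : a ≠ m := by simpa using List.mem_takeWhile_imp ha
      have : a ∈ w := (List.takeWhile_prefix _).sublist.mem ha
      rcases Finset.mem_insert.1 ((hmem a).1 this) with h | h
      · exact absurd h ha'
      · exact h
    have hnd' : (α ++ m :: β).Nodup := hsplit.symm ▸ hnd
    rw [List.nodup_append, List.nodup_cons] at hnd'
    obtain ⟨hαnd, ⟨hmβ, hβnd⟩, hdisj⟩ := hnd'
    have hβsub : ∀ b ∈ β, b ∈ S ∧ b ∉ α := by
      intro b hb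
      have hbw : b ∈ w := by
        rw [← hsplit]; exact List.mem_append_right _ (List.mem_cons_of_mem _ hb)
      have hbm : b ≠ m := fun h => hmβ (h ▸ hb)
      have hbS : b ∈ S := by
        rcases Finset.mem_insert.1 ((hmem b).1 hbw) with h | h
        · exact absurd h hbm
        · exact h
      refine ⟨hbS, fun hbα => ?_⟩
      exact hdisj b hbα b (List.mem_cons_of_mem _ hb) rfl
    rw [Finset.mem_sigma, Finset.mem_product]
    refine ⟨?_, ?_, ?_⟩
    · rw [Finset.mem_powerset]
      intro a ha
      exact hαsub a (List.mem_toFinset.1 ha)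
    · rw [mem_wordsOn_iff]
      exact ⟨hαnd, fun a => (List.mem_toFinset).symm⟩
    · rw [mem_wordsOn_iff]
      refine ⟨hβnd, fun b => ?_⟩
      rw [Finset.mem_sdiff, List.mem_toFinset]
      constructor
      · intro hb
        exact ⟨(hβsub b hb).1, (hβsub b hb).2⟩
      · rintro ⟨hbS, hbα⟩
        have hbw : b ∈ w := (hmem b).2 (Finset.mem_insert_of_mem hbS)
        rw [← hsplit] at hbw
        rcases List.mem_append.1 hbw with h | h
        · exact absurd h hbα
        · rcases List.mem_cons.1 h with rfl | h
          · exact absurd hbS hm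
          · exact h
  · -- backward map lands in wordsOn (insert m S)
    rintro ⟨T, α, β⟩ hp
    rw [Finset.mem_sigma, Finset.mem_product] at hp
    obtain ⟨hT, hα, hβ⟩ := hp
    rw [Finset.mem_powerset] at hT
    rw [mem_wordsOn_iff] at hα hβ
    obtain ⟨hαnd, hαmem⟩ := hα
    obtain ⟨hβnd, hβmem⟩ := hβ
    rw [mem_wordsOn_iff]
    constructor
    · refine List.Nodup.append hαnd (List.nodup_cons.2 ⟨fun h => ?_, hβnd⟩) ?_
      · exact hm (Finset.mem_sdiff.1 ((hβmem m).1 h)).1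
      · intro a haα ham
        have haT : a ∈ T := (hαmem a).1 haα
        rcases List.mem_cons.1 ham with rfl | h
        · exact hm (hT haT)
        · exact (Finset.mem_sdiff.1 ((hβmem a).1 h)).2 haT
    · intro a
      rw [List.mem_append, List.mem_cons, Finset.mem_insert]
      constructor
      · rintro (h | rfl | h)
        · exact Or.inr (hT ((hαmem a).1 h))
        · exact Or.inl rfl
        · exact Or.inr (Finset.mem_sdiff.1 ((hβmem a).1 h)).1
      · rintro (rfl | h)
        · exact Or.inr (Or.inl rfl)
        · by_cases haT : a ∈ T
          · exact Or.inl ((hαmem a).2 haT)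
          · exact Or.inr (Or.inr ((hβmem a).2 (Finset.mem_sdiff.2 ⟨h, haT⟩)))
  · -- left inverse
    intro w hw
    rw [mem_wordsOn_iff] at hw
    have hmw : m ∈ w := (hw.2 m).2 (Finset.mem_insert_self m S)
    exact takeWhile_ne_append w hmw
  · -- right inverse
    rintro ⟨T, α, β⟩ hp
    rw [Finset.mem_sigma, Finset.mem_product] at hp
    obtain ⟨hT, hα, hβ⟩ := hp
    rw [Finset.mem_powerset] at hT
    rw [mem_wordsOn_iff] at hα
    have hmα : m ∉ α := fun h => hm (hT ((hα.2 m).1 h))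
    obtain ⟨h1, h2⟩ := takeWhile_ne_of_not_mem (β := β) hmα
    have hαT : α.toFinset = T := by
      ext a
      rw [List.mem_toFinset]
      exact hα.2 a
    dsimp only
    rw [h1, h2]
    show (⟨α.toFinset, (α, β)⟩ : Σ _ : Finset ℕ, List ℕ × List ℕ) = ⟨T, (α, β)⟩
    rw [hαT]
  · -- values agree
    intro w hw
    rw [mem_wordsOn_iff] at hw
    have hmw : m ∈ w := (hw.2 m).2 (Finset.mem_insert_self m S)
    rw [takeWhile_ne_append w hmw]
lemma eq_nil_iff_of_mem_wordsOn {T : Finset ℕ} {α : List ℕ} (h : α ∈ wordsOn T) :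
    α = [] ↔ T = ∅ := by
  rw [mem_wordsOn_iff] at h
  constructor
  · intro hα
    subst hα
    exact Finset.eq_empty_of_forall_notMem fun a ha => by simpa using (h.2 a).2 ha
  · intro hT
    subst hT
    exact List.eq_nil_iff_forall_not_mem.2 fun a ha => by simpa using (h.2 a).1 ha

open Classical in
lemma A_insert {m : ℕ} {S : Finset ℕ} (hm : m ∉ S) (hlt : ∀ a ∈ S, m < a) (x : ℚ) :
    Aw (insert m S) x
      = ∑ T ∈ S.powerset, (if T = ∅ then 1 else x) * Bw T x * Aw (S \ T) x := by
  rw [Aw, sum_wordsOn_insert hm]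
  refine Finset.sum_congr rfl fun T hT => ?_
  rw [Finset.mem_powerset] at hT
  have key : ∀ α ∈ wordsOn T, ∀ β ∈ wordsOn (S \ T),
      (if ss (α ++ m :: β) then x ^ ldes (α ++ m :: β) else 0)
        = ((if T = ∅ then 1 else x) * (if good α then x ^ ldes α else 0))
            * (if ss β then x ^ ldes β else 0) := by
    intro α hα β hβ
    have hαlt : ∀ a ∈ α, m < a := fun a ha =>
      hlt a (hT ((mem_wordsOn_iff.1 hα).2 a |>.1 ha))
    have hβlt : ∀ b ∈ β, m < b := fun b hb =>
      hlt b (Finset.mem_sdiff.1 ((mem_wordsOn_iff.1 hβ).2 b |>.1 hb)).1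
    rw [ss_append hαlt hβlt, ldes_append hαlt hβlt]
    by_cases h1 : good α <;> by_cases h2 : ss β
    · rw [if_pos ⟨h1, h2⟩, if_pos h1, if_pos h2]
      by_cases h3 : α = []
      · rw [if_pos ((eq_nil_iff_of_mem_wordsOn hα).1 h3), if_pos h3, pow_add, pow_add, pow_zero]
        ring
      · rw [if_neg (fun hc => h3 ((eq_nil_iff_of_mem_wordsOn hα).2 hc)), if_neg h3,
          pow_add, pow_add, pow_one]
        ring
    · rw [if_neg (fun hc => h2 hc.2), if_neg h2]; ring
    · rw [if_neg (fun hc => h1 hc.1), if_neg h1]; ring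
    · rw [if_neg (fun hc => h1 hc.1), if_neg h1]; ring
  calc ∑ α ∈ wordsOn T, ∑ β ∈ wordsOn (S \ T),
        (if ss (α ++ m :: β) then x ^ ldes (α ++ m :: β) else 0)
      = ∑ α ∈ wordsOn T, ∑ β ∈ wordsOn (S \ T),
          ((if T = ∅ then 1 else x) * (if good α then x ^ ldes α else 0))
            * (if ss β then x ^ ldes β else 0) :=
        Finset.sum_congr rfl fun α hα => Finset.sum_congr rfl fun β hβ => key α hα β hβ
    _ = ∑ α ∈ wordsOn T, ((if T = ∅ then 1 else x) * (if good α then x ^ ldes α else 0))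
          * ∑ β ∈ wordsOn (S \ T), (if ss β then x ^ ldes β else 0) :=
        Finset.sum_congr rfl fun α _ => (Finset.mul_sum _ _ _).symm
    _ = (∑ α ∈ wordsOn T, (if T = ∅ then 1 else x) * (if good α then x ^ ldes α else 0))
          * ∑ β ∈ wordsOn (S \ T), (if ss β then x ^ ldes β else 0) :=
        (Finset.sum_mul _ _ _).symm
    _ = (if T = ∅ then 1 else x) * Bw T x * Aw (S \ T) x := by
        rw [← Finset.mul_sum, Bw, Aw]

open Classical in
lemma B_insert {m : ℕ} {S : Finset ℕ} (hm : m ∉ S) (hlt : ∀ a ∈ S, m < a)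
    (hS : S.Nonempty) (x : ℚ) :
    Bw (insert m S) x
      = ∑ T ∈ (S.erase (S.min' hS)).powerset,
          (if T = ∅ then 1 else x) * Bw T x * Bw (S \ T) x := by
  set μ := S.min' hS with hμ
  have hstep : Bw (insert m S) x
      = ∑ T ∈ S.powerset,
          (if μ ∈ T then 0 else (if T = ∅ then 1 else x) * Bw T x * Bw (S \ T) x) := by
    rw [Bw, sum_wordsOn_insert hm]
    refine Finset.sum_congr rfl fun T hT => ?_
    rw [Finset.mem_powerset] at hT
    by_cases hμT : μ ∈ T
    · rw [if_pos hμT]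
      refine Finset.sum_eq_zero fun α hα => Finset.sum_eq_zero fun β hβ => ?_
      have hαlt : ∀ a ∈ α, m < a := fun a ha =>
        hlt a (hT ((mem_wordsOn_iff.1 hα).2 a |>.1 ha))
      have hβlt : ∀ b ∈ β, m < b := fun b hb =>
        hlt b (Finset.mem_sdiff.1 ((mem_wordsOn_iff.1 hβ).2 b |>.1 hb)).1
      rw [good_append hαlt hβlt]
      refine if_neg (fun hc => ?_)
      obtain ⟨-, -, hdom⟩ := hc
      have hμα : μ ∈ α := ((mem_wordsOn_iff.1 hα).2 μ).2 hμT
      have hβnil : β.filter (fun v => v < μ + 1) = [] := by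
        rw [List.filter_eq_nil_iff]
        intro b hb
        have hbS : b ∈ S \ T := (mem_wordsOn_iff.1 hβ).2 b |>.1 hb
        have h1 : μ ≤ b := S.min'_le b (Finset.mem_sdiff.1 hbS).1
        have h2 : b ≠ μ := fun h => (Finset.mem_sdiff.1 hbS).2 (h ▸ hμT)
        simp only [decide_eq_true_eq]
        omega
      have := hdom (μ + 1) hβnil
      rw [List.filter_eq_nil_iff] at this
      exact this μ hμα (by simp)
    · rw [if_neg hμT]
      have hμβset : μ ∈ S \ T := Finset.mem_sdiff.2 ⟨S.min'_mem hS, hμT⟩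
      have key : ∀ α ∈ wordsOn T, ∀ β ∈ wordsOn (S \ T),
          (if good (α ++ m :: β) then x ^ ldes (α ++ m :: β) else 0)
            = ((if T = ∅ then 1 else x) * (if good α then x ^ ldes α else 0))
                * (if good β then x ^ ldes β else 0) := by
        intro α hα β hβ
        have hαlt : ∀ a ∈ α, m < a := fun a ha =>
          hlt a (hT ((mem_wordsOn_iff.1 hα).2 a |>.1 ha))
        have hβlt : ∀ b ∈ β, m < b := fun b hb =>
          hlt b (Finset.mem_sdiff.1 ((mem_wordsOn_iff.1 hβ).2 b |>.1 hb)).1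
        have hdom : ∀ k, β.filter (fun v => v < k) = [] → α.filter (fun v => v < k) = [] := by
          intro k hk
          have hμβ : μ ∈ β := ((mem_wordsOn_iff.1 hβ).2 μ).2 hμβset
          have hkμ : k ≤ μ := by
            rw [List.filter_eq_nil_iff] at hk
            have := hk μ hμβ
            simp only [decide_eq_true_eq] at this
            omega
          refine filter_lt_nil fun a ha => ?_
          have haS : a ∈ S := hT ((mem_wordsOn_iff.1 hα).2 a |>.1 ha)
          exact hkμ.trans (S.min'_le a haS)
        rw [good_append hαlt hβlt, ldes_append hαlt hβlt]
        by_cases h1 : good α <;> by_cases h2 : good β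
        · rw [if_pos ⟨h1, h2, hdom⟩, if_pos h1, if_pos h2]
          by_cases h3 : α = []
          · rw [if_pos ((eq_nil_iff_of_mem_wordsOn hα).1 h3), if_pos h3,
              pow_add, pow_add, pow_zero]
            ring
          · rw [if_neg (fun hc => h3 ((eq_nil_iff_of_mem_wordsOn hα).2 hc)), if_neg h3,
              pow_add, pow_add, pow_one]
            ring
        · rw [if_neg (fun hc => h2 hc.2.1), if_neg h2]; ring
        · rw [if_neg (fun hc => h1 hc.1), if_neg h1]; ring
        · rw [if_neg (fun hc => h1 hc.1), if_neg h1]; ring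
      calc ∑ α ∈ wordsOn T, ∑ β ∈ wordsOn (S \ T),
            (if good (α ++ m :: β) then x ^ ldes (α ++ m :: β) else 0)
          = ∑ α ∈ wordsOn T, ∑ β ∈ wordsOn (S \ T),
              ((if T = ∅ then 1 else x) * (if good α then x ^ ldes α else 0))
                * (if good β then x ^ ldes β else 0) :=
            Finset.sum_congr rfl fun α hα => Finset.sum_congr rfl fun β hβ => key α hα β hβ
        _ = ∑ α ∈ wordsOn T, ((if T = ∅ then 1 else x) * (if good α then x ^ ldes α else 0))
              * ∑ β ∈ wordsOn (S \ T), (if good β then x ^ ldes β else 0) :=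
            Finset.sum_congr rfl fun α _ => (Finset.mul_sum _ _ _).symm
        _ = (∑ α ∈ wordsOn T, (if T = ∅ then 1 else x) * (if good α then x ^ ldes α else 0))
              * ∑ β ∈ wordsOn (S \ T), (if good β then x ^ ldes β else 0) :=
            (Finset.sum_mul _ _ _).symm
        _ = (if T = ∅ then 1 else x) * Bw T x * Bw (S \ T) x := by
            rw [← Finset.mul_sum, Bw, Bw]
  have hzero : ∀ T ∈ S.powerset, T ∉ (S.erase μ).powerset →
      (if μ ∈ T then 0 else (if T = ∅ then 1 else x) * Bw T x * Bw (S \ T) x) = 0 := by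
    intro T hT hT'
    rw [Finset.mem_powerset] at hT hT'
    have hμT : μ ∈ T := by
      by_contra hμT
      exact hT' (fun a ha => Finset.mem_erase.2 ⟨fun h => hμT (h ▸ ha), hT ha⟩)
    rw [if_pos hμT]
  rw [hstep, ← Finset.sum_subset (Finset.powerset_mono.2 (S.erase_subset μ)) hzero]
  refine Finset.sum_congr rfl fun T hT => ?_
  rw [Finset.mem_powerset] at hT
  exact if_neg (fun h => (Finset.mem_erase.1 (hT h)).1 rfl)
/-! ### the recursions for `An`, `Bn` -/

lemma sum_powerset_eq {S : Finset ℕ} {f : Finset ℕ → ℚ} {g : ℕ → ℚ}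
    (h : ∀ T ∈ S.powerset, f T = g T.card) :
    ∑ T ∈ S.powerset, f T
      = ∑ j ∈ Finset.range (S.card + 1), (S.card.choose j : ℚ) * g j := by
  rw [Finset.sum_powerset]
  refine Finset.sum_congr rfl fun j hj => ?_
  have : ∀ T ∈ Finset.powersetCard j S, f T = g j := by
    intro T hT
    rw [Finset.mem_powersetCard] at hT
    rw [h T (Finset.mem_powerset.2 hT.1), hT.2]
  rw [Finset.sum_congr rfl this, Finset.sum_const, Finset.card_powersetCard, nsmul_eq_mul]

lemma range_succ_eq_insert (n : ℕ) :
    Finset.range (n + 1) = insert 0 (Finset.image (· + 1) (Finset.range n)) := by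
  ext v
  simp only [Finset.mem_range, Finset.mem_insert, Finset.mem_image]
  constructor
  · intro hv
    rcases Nat.eq_zero_or_pos v with rfl | hpos
    · exact Or.inl rfl
    · exact Or.inr ⟨v - 1, by omega, by omega⟩
  · rintro (rfl | ⟨u, hu, rfl⟩) <;> omega

lemma image_succ_card (n : ℕ) : (Finset.image (· + 1) (Finset.range n)).card = n := by
  rw [Finset.card_image_of_injective _ (fun a b h => by omega), Finset.card_range]

lemma An_succ (n : ℕ) (x : ℚ) :
    An (n + 1) x = ∑ j ∈ Finset.range (n + 1),
      (n.choose j : ℚ) * ((if j = 0 then 1 else x) * Bn j x * An (n - j) x) := by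
  set S : Finset ℕ := Finset.image (· + 1) (Finset.range n) with hSdef
  have hm : (0 : ℕ) ∉ S := by simp [hSdef]
  have hlt : ∀ a ∈ S, 0 < a := by
    intro a ha
    simp only [hSdef, Finset.mem_image] at ha
    obtain ⟨u, -, rfl⟩ := ha
    omega
  have hcard : S.card = n := image_succ_card n
  rw [An]
  conv_lhs => rw [range_succ_eq_insert, ← hSdef]
  rw [A_insert hm hlt]
  have h := sum_powerset_eq (S := S)
    (f := fun T => (if T = ∅ then 1 else x) * Bw T x * Aw (S \ T) x)
    (g := fun j => (if j = 0 then 1 else x) * Bn j x * An (n - j) x) ?_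
  · rw [h, hcard]
  · intro T hT
    rw [Finset.mem_powerset] at hT
    rw [Bw_eq_Bn, Aw_eq_An, Finset.card_sdiff_of_subset hT, hcard]
    by_cases h0 : T = ∅
    · rw [if_pos h0, if_pos (by rw [h0]; exact Finset.card_empty)]
    · rw [if_neg h0, if_neg (fun hc => h0 (Finset.card_eq_zero.1 hc))]

lemma min'_image_succ {n : ℕ} (hn : 1 ≤ n) (h : (Finset.image (· + 1) (Finset.range n)).Nonempty) :
    (Finset.image (· + 1) (Finset.range n)).min' h = 1 := by
  apply le_antisymm
  · exact Finset.min'_le _ _ (Finset.mem_image.2 ⟨0, by simp; omega, rfl⟩)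
  · apply Finset.le_min'
    intro y hy
    obtain ⟨u, -, rfl⟩ := Finset.mem_image.1 hy
    omega

lemma Bn_succ {n : ℕ} (hn : 1 ≤ n) (x : ℚ) :
    Bn (n + 1) x = ∑ j ∈ Finset.range n,
      ((n - 1).choose j : ℚ) * ((if j = 0 then 1 else x) * Bn j x * Bn (n - j) x) := by
  set S : Finset ℕ := Finset.image (· + 1) (Finset.range n) with hSdef
  have hm : (0 : ℕ) ∉ S := by simp [hSdef]
  have hlt : ∀ a ∈ S, 0 < a := by
    intro a ha
    simp only [hSdef, Finset.mem_image] at ha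
    obtain ⟨u, -, rfl⟩ := ha
    omega
  have hcard : S.card = n := image_succ_card n
  have hS : S.Nonempty := ⟨1, Finset.mem_image.2 ⟨0, by simp; omega, rfl⟩⟩
  rw [Bn]
  conv_lhs => rw [range_succ_eq_insert, ← hSdef]
  rw [B_insert hm hlt hS]
  have hmin : S.min' hS = 1 := min'_image_succ hn hS
  have hcard' : (S.erase (S.min' hS)).card = n - 1 := by
    rw [Finset.card_erase_of_mem (S.min'_mem hS), hcard]
  have h := sum_powerset_eq (S := S.erase (S.min' hS))
    (f := fun T => (if T = ∅ then 1 else x) * Bw T x * Bw (S \ T) x)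
    (g := fun j => (if j = 0 then 1 else x) * Bn j x * Bn (n - j) x) ?_
  · rw [h, hcard']
    have : n - 1 + 1 = n := by omega
    rw [this]
  · intro T hT
    rw [Finset.mem_powerset] at hT
    have hTS : T ⊆ S := hT.trans (S.erase_subset _)
    rw [Bw_eq_Bn, Bw_eq_Bn, Finset.card_sdiff_of_subset hTS, hcard]
    by_cases h0 : T = ∅
    · rw [if_pos h0, if_pos (by rw [h0]; exact Finset.card_empty)]
    · rw [if_neg h0, if_neg (fun hc => h0 (Finset.card_eq_zero.1 hc))]

lemma An_zero (x : ℚ) : An 0 x = 1 := by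
  rw [An, show Finset.range 0 = ∅ from rfl, Aw_empty]

lemma Bn_zero (x : ℚ) : Bn 0 x = 1 := by
  rw [Bn, show Finset.range 0 = ∅ from rfl, Bw_empty]

lemma Bn_one (x : ℚ) : Bn 1 x = 1 := by
  rw [Bn, show Finset.range 1 = {0} from rfl, Bw_singleton]

lemma Bn_eq_An (n : ℕ) (x : ℚ) : Bn (n + 1) x = An n x := by
  induction n using Nat.strong_induction_on with
  | _ n ih =>
    rcases Nat.eq_zero_or_pos n with rfl | hn
    · rw [Bn_one, An_zero]
    · have hn1 : n - 1 + 1 = n := by omega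
      rw [Bn_succ hn x]
      have hform : ∀ j ∈ Finset.range n,
          ((n - 1).choose j : ℚ) * ((if j = 0 then 1 else x) * Bn j x * Bn (n - j) x)
            = ((n - 1).choose j : ℚ) * ((if j = 0 then 1 else x) * Bn j x * An (n - 1 - j) x) := by
        intro j hj
        rw [Finset.mem_range] at hj
        have h1 : n - j = (n - 1 - j) + 1 := by omega
        rw [h1, ih (n - 1 - j) (by omega)]
      rw [Finset.sum_congr rfl hform]
      have := An_succ (n - 1) x
      rw [hn1] at this
      rw [← this]
/-! ### relating permutations to words -/

lemma ldes_eq_sum : ∀ w : List ℕ,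
    ldes w = ∑ i ∈ Finset.range (w.length - 1),
      (if w.getD (i + 1) 0 < w.getD i 0 then 1 else 0) := by
  intro w
  induction w with
  | nil => simp [ldes]
  | cons a w ih =>
    cases w with
    | nil => simp [ldes]
    | cons b t =>
      show (if b < a then 1 else 0) + ldes (b :: t) = _
      rw [ih]
      have hlen : (a :: b :: t).length - 1 = t.length + 1 := rfl
      have hlen2 : (b :: t).length - 1 = t.length := rfl
      rw [hlen, hlen2,
        Finset.sum_range_succ' (fun i =>
          if (a :: b :: t).getD (i + 1) 0 < (a :: b :: t).getD i 0 then 1 else 0) t.length]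
      simp only [List.getD_cons_succ, List.getD_cons_zero]
      omega

lemma des_eq_ldes {n : ℕ} (π : Equiv.Perm (Fin n)) :
    des π = ldes (List.ofFn (fun i => ((π i : ℕ)))) := by
  classical
  set w := List.ofFn (fun i => ((π i : ℕ))) with hw
  have hlen : w.length = n := List.length_ofFn
  have hget : ∀ (i : ℕ) (h : i < n), w.getD i 0 = (π ⟨i, h⟩ : ℕ) := by
    intro i h
    rw [List.getD_eq_getElem _ _ (by rw [hlen]; exact h)]
    exact List.getElem_ofFn _
  have step1 : des π = ∑ i ∈ Finset.range n,
      (if i + 1 < n ∧ w.getD (i + 1) 0 < w.getD i 0 then 1 else 0) := by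
    rw [des, Finset.card_filter, ← Fin.sum_univ_eq_sum_range
      (fun i => if i + 1 < n ∧ w.getD (i + 1) 0 < w.getD i 0 then 1 else 0) n]
    refine Finset.sum_congr rfl fun i _ => ?_
    by_cases h : (i : ℕ) + 1 < n
    · have hfs : π (finSucc i) = π ⟨(i : ℕ) + 1, h⟩ := by
        congr 1
        apply Fin.ext
        simp [finSucc, Nat.mod_eq_of_lt h]
      have hiff : (w.getD ((i : ℕ) + 1) 0 < w.getD (i : ℕ) 0) ↔ π (finSucc i) < π i := by
        rw [hget _ h, hget _ i.isLt]
        simp only [Fin.eta]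
        rw [hfs, Fin.lt_def]
      by_cases h2 : π (finSucc i) < π i
      · rw [if_pos ⟨h, h2⟩, if_pos ⟨h, hiff.2 h2⟩]
      · rw [if_neg (fun hc => h2 hc.2), if_neg (fun hc => h2 (hiff.1 hc.2))]
    · rw [if_neg (fun hc => h hc.1), if_neg (fun hc => h hc.1)]
  rw [step1, ldes_eq_sum w, hlen]
  cases n with
  | zero => simp
  | succ k =>
    rw [Finset.sum_range_succ (fun i =>
      if i + 1 < k + 1 ∧ w.getD (i + 1) 0 < w.getD i 0 then 1 else 0) k]
    rw [if_neg (by omega : ¬(k + 1 < k + 1 ∧ w.getD (k + 1) 0 < w.getD k 0))]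
    have : k + 1 - 1 = k := rfl
    rw [this, add_zero]
    refine Finset.sum_congr rfl fun i hi => ?_
    rw [Finset.mem_range] at hi
    by_cases hc : w.getD (i + 1) 0 < w.getD i 0
    · rw [if_pos ⟨by omega, hc⟩, if_pos hc]
    · rw [if_neg (fun h => hc h.2), if_neg hc]

lemma Simsun_iff_ss {n : ℕ} (π : Equiv.Perm (Fin n)) :
    Simsun π ↔ ss (List.ofFn (fun i => ((π i : ℕ)))) := by
  constructor
  · rintro h k ⟨a, b, c, hinf, h1, h2⟩
    exact h k a b c hinf ⟨h1, h2⟩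
  · intro h k a b c hinf hbc
    exact h k ⟨a, b, c, hinf, hbc.1, hbc.2⟩

open Classical in
lemma Rsim_eq_An (n : ℕ) (x : ℚ) : Rsim n x = An n x := by
  rw [Rsim, An, Aw, Finset.sum_filter]
  refine Finset.sum_bij (fun π _ => List.ofFn (fun i => ((π i : ℕ)))) ?_ ?_ ?_ ?_
  · intro π _
    rw [mem_wordsOn_iff]
    constructor
    · exact List.nodup_ofFn.2 (fun i j hij => π.injective (Fin.val_injective hij))
    · intro a
      rw [List.mem_ofFn, Finset.mem_range]
      constructor
      · rintro ⟨i, rfl⟩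
        exact (π i).is_lt
      · intro ha
        exact ⟨π.symm ⟨a, ha⟩, by simp⟩
  · intro π₁ _ π₂ _ h
    have := List.ofFn_inj.1 h
    exact Equiv.ext fun i => Fin.val_injective (congrFun this i)
  · intro w hw
    have hlen : w.length = n := by
      rw [length_of_mem_wordsOn hw, Finset.card_range]
    have hmem := (mem_wordsOn_iff.1 hw).2
    have hnd := (mem_wordsOn_iff.1 hw).1
    have hval : ∀ j : Fin w.length, w.get j < n := by
      intro j
      have h1 : w.get j ∈ w := by
        rcases j with ⟨j, hj⟩
        exact List.get_mem w ⟨j, hj⟩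
      simpa using Finset.mem_range.1 ((hmem _).1 h1)
    set f : Fin n → Fin n := fun i => ⟨w.get (Fin.cast hlen.symm i), hval _⟩ with hf
    have hinj : Function.Injective f := by
      intro a b hab
      have : w.get (Fin.cast hlen.symm a) = w.get (Fin.cast hlen.symm b) :=
        congrArg Fin.val hab
      have h2 := List.nodup_iff_injective_get.1 hnd this
      have h3 : (a : ℕ) = (b : ℕ) := by
        have := congrArg Fin.val h2
        simpa using this
      exact Fin.ext h3
    refine ⟨Equiv.ofBijective f (Finite.injective_iff_bijective.1 hinj), Finset.mem_univ _, ?_⟩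
    apply List.ext_get (by rw [List.length_ofFn, hlen])
    intro j h1 h2
    rw [List.get_ofFn]
    show (f _ : ℕ) = _
    rfl
  · intro π _
    rw [des_eq_ldes π]
    by_cases h : Simsun π
    · rw [if_pos h, if_pos ((Simsun_iff_ss π).1 h)]
    · rw [if_neg h, if_neg (fun hc => h ((Simsun_iff_ss π).2 hc))]
end SimAux

/-- quadratic recursion for the Simsun descent polynomials. -/
theorem stmt17 (n : ℕ) (hn : 1 ≤ n) (x : ℚ) :
    Rsim 0 x = 1 ∧
    Rsim (n + 1) x =
      Rsim n x + x * ∑ i ∈ Finset.Icc 1 n,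
        (n.choose i : ℚ) * Rsim (i - 1) x * Rsim (n - i) x := by
  constructor
  · rw [SimAux.Rsim_eq_An, SimAux.An_zero]
  · have hIcc : ∑ i ∈ Finset.Icc 1 n, (n.choose i : ℚ) * Rsim (i - 1) x * Rsim (n - i) x
        = ∑ j ∈ Finset.range n, (n.choose (j + 1) : ℚ) * Rsim j x * Rsim (n - (j + 1)) x := by
      rw [show Finset.Icc 1 n = Finset.image (· + 1) (Finset.range n) by
        ext v
        simp only [Finset.mem_Icc, Finset.mem_image, Finset.mem_range]
        constructor
        · rintro ⟨h1, h2⟩; exact ⟨v - 1, by omega, by omega⟩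
        · rintro ⟨a, ha, rfl⟩; omega]
      rw [Finset.sum_image (fun a _ b _ h => by omega)]
      exact Finset.sum_congr rfl fun j _ => by rw [Nat.add_sub_cancel]
    rw [hIcc, SimAux.Rsim_eq_An (n + 1), SimAux.Rsim_eq_An n, SimAux.An_succ n x,
      Finset.sum_range_succ' (fun j =>
        (n.choose j : ℚ) * ((if j = 0 then 1 else x) * SimAux.Bn j x * SimAux.An (n - j) x)) n]
    rw [if_pos rfl, SimAux.Bn_zero, Nat.choose_zero_right, Nat.sub_zero, Nat.cast_one]
    rw [Finset.mul_sum]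
    rw [add_comm]
    congr 1
    · ring
    · refine Finset.sum_congr rfl fun j hj => ?_
      rw [if_neg (Nat.succ_ne_zero j), SimAux.Bn_eq_An j x, SimAux.Rsim_eq_An j,
        SimAux.Rsim_eq_An (n - (j + 1))]
      ring
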